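/- With the same setup, the triangle probability is negligible compared with the two-star probability: P(X_1 X_2 > a_n, X_2 X_3 > a_n, X_1 X_3 > a_n) = o(1/(n^γ log n)) as n → ∞. -/

import Mathlib

open MeasureTheory Filter Real Set

noncomputable def paretoMeasure (α : ℝ) : Measure ℝ :=
  MeasureTheory.volume.withDensity
    (fun x => ENNReal.ofReal (if 1 ≤ x then α * x ^ (-α - 1) else 0))

instance pareto_sigmaFinite (α : ℝ) : SigmaFinite (paretoMeasure α) := by
  unfold paretoMeasure; infer_instance

lemma pareto_density_meas (α : ℝ) :
    Measurable (fun x : ℝ => ENNReal.ofReal (if 1 ≤ x then α * x ^ (-α - 1) else 0)) := by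
  apply Measurable.ennreal_ofReal
  apply Measurable.ite measurableSet_Ici
  · measurability
  · exact measurable_const

lemma pareto_moment (α β : ℝ) (hα : 0 < α) (hβ : β < α) :
    ∫⁻ x, ENNReal.ofReal (x ^ β) ∂(paretoMeasure α) = ENNReal.ofReal (α / (α - β)) := by
  have hmeas : Measurable fun x : ℝ => ENNReal.ofReal (x ^ β) := by measurability
  rw [paretoMeasure, lintegral_withDensity_eq_lintegral_mul _ (pareto_density_meas α) hmeas]
  simp only [Pi.mul_apply]
  have h1 : ∀ᵐ x ∂(volume : Measure ℝ),
      (ENNReal.ofReal (if 1 ≤ x then α * x ^ (-α - 1) else 0) * ENNReal.ofReal (x ^ β)) =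
      (Ioi (1:ℝ)).indicator (fun x => ENNReal.ofReal (α * x ^ (β - α - 1))) x := by
    filter_upwards [compl_mem_ae_iff.2 (volume_singleton (a := (1:ℝ)))] with x hx
    rcases lt_trichotomy x 1 with h | h | h
    · rw [Set.indicator_of_notMem (by simpa using h.le), if_neg (by linarith)]
      simp
    · exact absurd h hx
    · rw [Set.indicator_of_mem (mem_Ioi.2 h), if_pos h.le, ← ENNReal.ofReal_mul (by positivity)]
      congr 1
      rw [mul_assoc, ← Real.rpow_add (by linarith)]
      ring_nf
  rw [lintegral_congr_ae h1, lintegral_indicator measurableSet_Ioi _]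
  rw [← ofReal_integral_eq_lintegral_ofReal]
  · rw [MeasureTheory.integral_const_mul, integral_Ioi_rpow_of_lt (by linarith) one_pos]
    congr 1
    rw [Real.one_rpow]
    rw [show β - α - 1 + 1 = -(α - β) by ring, div_neg, neg_div, neg_neg, mul_one_div]
  · exact (integrableOn_Ioi_rpow_of_lt (by linarith) one_pos).const_mul α
  · filter_upwards [ae_restrict_mem measurableSet_Ioi] with x hx
    have : (0:ℝ) < x := lt_trans one_pos hx
    positivity

lemma pareto_univ (α : ℝ) (hα : 0 < α) : paretoMeasure α univ = 1 := by
  have h := pareto_moment α 0 hα hα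
  simp only [Real.rpow_zero, ENNReal.ofReal_one, lintegral_one, sub_zero,
    div_self hα.ne'] at h
  exact h

lemma pareto_Iio (α : ℝ) : paretoMeasure α (Iio 1) = 0 := by
  refine le_antisymm ?_ zero_le
  rw [paretoMeasure, withDensity_apply _ measurableSet_Iio]
  refine le_trans (setLIntegral_mono (g := fun _ => 0) measurable_const fun x hx => ?_) (by simp)
  rw [if_neg (not_le.2 hx)]
  simp

lemma triangle_bound (α : ℝ) (hα : 0 < α) (t : ℝ) (ht : 1 ≤ t) :
    ((paretoMeasure α).prod ((paretoMeasure α).prod (paretoMeasure α)))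
      {p : ℝ × ℝ × ℝ | p.1 * p.2.1 > t ∧ p.2.1 * p.2.2 > t ∧ p.1 * p.2.2 > t}
      ≤ ENNReal.ofReal (64 / t ^ (9 * α / 8)) := by
  set μ := paretoMeasure α with hμ
  haveI : IsProbabilityMeasure μ := ⟨pareto_univ α hα⟩
  set ν := μ.prod (μ.prod μ) with hν
  set β := 3 * α / 4 with hβdef
  have hβpos : 0 < β := by positivity
  have hβlt : β < α := by rw [hβdef]; linarith
  set E : Set (ℝ × ℝ × ℝ) := {p | p.1 * p.2.1 > t ∧ p.2.1 * p.2.2 > t ∧ p.1 * p.2.2 > t} with hE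
  set C : Set (ℝ × ℝ × ℝ) := {p | 1 ≤ p.1 ∧ 1 ≤ p.2.1 ∧ 1 ≤ p.2.2} with hC
  -- the complement of C is null
  have hCc : ν Cᶜ = 0 := by
    have hsub : Cᶜ ⊆ (Iio 1 ×ˢ (univ : Set (ℝ × ℝ))) ∪
        ((univ : Set ℝ) ×ˢ (Iio 1 ×ˢ (univ : Set ℝ))) ∪
        ((univ : Set ℝ) ×ˢ ((univ : Set ℝ) ×ˢ Iio 1)) := by
      intro p hp
      simp only [hC, mem_compl_iff, mem_setOf_eq, not_and_or, not_le] at hp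
      rcases hp with h | h | h
      · exact Or.inl (Or.inl ⟨h, mem_univ _⟩)
      · exact Or.inl (Or.inr ⟨mem_univ _, h, mem_univ _⟩)
      · exact Or.inr ⟨mem_univ _, mem_univ _, h⟩
    refine le_antisymm (le_trans (measure_mono hsub) ?_) zero_le
    refine le_trans (measure_union_le _ _) ?_
    refine le_trans (add_le_add_left (measure_union_le _ _) _) ?_
    rw [hν, Measure.prod_prod, Measure.prod_prod, Measure.prod_prod,
      Measure.prod_prod, Measure.prod_prod, pareto_Iio]
    simp [pareto_Iio]
  have hEsplit : ν E ≤ ν (E ∩ C) := by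
    calc ν E ≤ ν ((E ∩ C) ∪ Cᶜ) := measure_mono (fun p hp => by
            by_cases h : p ∈ C
            · exact Or.inl ⟨hp, h⟩
            · exact Or.inr h)
      _ ≤ ν (E ∩ C) + ν Cᶜ := measure_union_le _ _
      _ = ν (E ∩ C) := by rw [hCc, add_zero]
  -- Markov
  set F : ℝ × ℝ × ℝ → ENNReal := fun p =>
    ENNReal.ofReal (p.1 ^ β) * (ENNReal.ofReal (p.2.1 ^ β) * ENNReal.ofReal (p.2.2 ^ β)) with hF
  have hm0 : Measurable fun x : ℝ => ENNReal.ofReal (x ^ β) := by measurability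
  have hFmeas : Measurable F :=
    (hm0.comp measurable_fst).mul ((hm0.comp (measurable_fst.comp measurable_snd)).mul
      (hm0.comp (measurable_snd.comp measurable_snd)))
  have hint : ∫⁻ p, F p ∂ν = ENNReal.ofReal 4 * (ENNReal.ofReal 4 * ENNReal.ofReal 4) := by
    have hM : ∫⁻ x, ENNReal.ofReal (x ^ β) ∂μ = ENNReal.ofReal 4 := by
      rw [hμ, pareto_moment α β hα hβlt]
      congr 1
      rw [hβdef]
      rw [show α - 3 * α / 4 = α / 4 by ring, div_div_eq_mul_div, mul_comm,
        mul_div_assoc, div_self hα.ne', mul_one]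
    have hm1 : AEMeasurable (fun x : ℝ => ENNReal.ofReal (x ^ β)) μ := hm0.aemeasurable
    have hm2 : AEMeasurable (fun q : ℝ × ℝ =>
        ENNReal.ofReal (q.1 ^ β) * ENNReal.ofReal (q.2 ^ β)) (μ.prod μ) :=
      ((hm0.comp measurable_fst).mul (hm0.comp measurable_snd)).aemeasurable
    rw [hν, lintegral_prod_mul hm1 hm2, lintegral_prod_mul hm1 hm1, hM]
  have hlow : ∀ p ∈ E ∩ C, ENNReal.ofReal (t ^ (9 * α / 8)) ≤ F p := by
    rintro ⟨x, y, z⟩ ⟨⟨h1, h2, h3⟩, hx, hy, hz⟩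
    simp only at h1 h2 h3 hx hy hz
    have hx0 : (0:ℝ) < x := lt_of_lt_of_le one_pos hx
    have hy0 : (0:ℝ) < y := lt_of_lt_of_le one_pos hy
    have hz0 : (0:ℝ) < z := lt_of_lt_of_le one_pos hz
    have ht0 : (0:ℝ) < t := lt_of_lt_of_le one_pos ht
    have hcube : t ^ (3:ℕ) ≤ (x * y * z) ^ (2:ℕ) := by
      have : t * t * t ≤ (x * y) * ((y * z) * (x * z)) := by
        have h12 : t * t ≤ (x * y) * (y * z) :=
          mul_le_mul h1.le h2.le ht0.le (by positivity)
        calc t * t * t ≤ ((x * y) * (y * z)) * (x * z) :=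
              mul_le_mul h12 h3.le ht0.le (by positivity)
          _ = (x * y) * ((y * z) * (x * z)) := by ring
      calc t ^ (3:ℕ) = t * t * t := by ring
        _ ≤ (x * y) * ((y * z) * (x * z)) := this
        _ = (x * y * z) ^ (2:ℕ) := by ring
    have hbase : t ^ (3/2 : ℝ) ≤ x * y * z := by
      have h1' : (t ^ (3:ℕ) : ℝ) ^ ((2:ℝ)⁻¹) ≤ ((x * y * z) ^ (2:ℕ) : ℝ) ^ ((2:ℝ)⁻¹) :=
        Real.rpow_le_rpow (by positivity) hcube (by norm_num)
      rw [← Real.rpow_natCast t 3, ← Real.rpow_natCast (x*y*z) 2,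
        ← Real.rpow_mul ht0.le, ← Real.rpow_mul (by positivity)] at h1'
      norm_num at h1'
      convert h1' using 2
    have hrp : t ^ (9 * α / 8) ≤ (x * y * z) ^ β := by
      calc t ^ (9 * α / 8) = (t ^ (3/2 : ℝ)) ^ β := by
            rw [← Real.rpow_mul ht0.le]; congr 1; rw [hβdef]; ring
        _ ≤ (x * y * z) ^ β :=
            Real.rpow_le_rpow (by positivity) hbase hβpos.le
    rw [hF]
    simp only
    rw [← ENNReal.ofReal_mul (by positivity), ← ENNReal.ofReal_mul (by positivity)]
    apply ENNReal.ofReal_le_ofReal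
    calc t ^ (9 * α / 8) ≤ (x * y * z) ^ β := hrp
      _ = x ^ β * (y ^ β * z ^ β) := by
          rw [Real.mul_rpow (by positivity) (by positivity),
            Real.mul_rpow (by positivity) (by positivity)]
          ring
  have hmarkov : ENNReal.ofReal (t ^ (9 * α / 8)) * ν (E ∩ C) ≤ ENNReal.ofReal 64 := by
    calc ENNReal.ofReal (t ^ (9 * α / 8)) * ν (E ∩ C)
        = ∫⁻ _ in E ∩ C, ENNReal.ofReal (t ^ (9 * α / 8)) ∂ν := (setLIntegral_const _ _).symm
      _ ≤ ∫⁻ p in E ∩ C, F p ∂ν := setLIntegral_mono hFmeas hlow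
      _ ≤ ∫⁻ p, F p ∂ν := setLIntegral_le_lintegral _ _
      _ = ENNReal.ofReal 4 * (ENNReal.ofReal 4 * ENNReal.ofReal 4) := hint
      _ = ENNReal.ofReal 64 := by
          rw [← ENNReal.ofReal_mul (by norm_num), ← ENNReal.ofReal_mul (by norm_num)]
          norm_num
  have htpos : (0:ℝ) < t ^ (9 * α / 8) := by positivity
  have hfinal : ν (E ∩ C) ≤ ENNReal.ofReal (64 / t ^ (9 * α / 8)) := by
    rw [ENNReal.ofReal_div_of_pos htpos]
    rw [ENNReal.le_div_iff_mul_le (Or.inl (by simp [htpos.ne', ENNReal.ofReal_eq_zero]; linarith))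
      (Or.inl ENNReal.ofReal_ne_top)]
    rw [mul_comm]
    exact hmarkov
  exact le_trans hEsplit hfinal

noncomputable def aSeq (α γ : ℝ) (n : ℕ) : ℝ := ((n : ℝ) ^ γ * Real.log n) ^ (1/α)
theorem stmt12 (α γ : ℝ) (hα : 0 < α) (hγ : 0 < γ) :
    Tendsto (fun n : ℕ =>
      (n : ℝ) ^ γ * Real.log n *
        (((paretoMeasure α).prod ((paretoMeasure α).prod (paretoMeasure α)))
          {p : ℝ × ℝ × ℝ | p.1 * p.2.1 > aSeq α γ n ∧ p.2.1 * p.2.2 > aSeq α γ n ∧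
            p.1 * p.2.2 > aSeq α γ n}).toReal)
      atTop (nhds 0) := by
  have h4 : Tendsto (fun n : ℕ => (n:ℝ) ^ γ * Real.log n) atTop atTop := by
    apply Tendsto.atTop_mul_atTop₀
    · exact (tendsto_rpow_atTop hγ).comp tendsto_natCast_atTop_atTop
    · exact Real.tendsto_log_atTop.comp tendsto_natCast_atTop_atTop
  have hg0 : Tendsto (fun n : ℕ => 64 * ((n:ℝ) ^ γ * Real.log n) ^ (-(1/8) : ℝ))
      atTop (nhds 0) := by
    have h5 := ((tendsto_rpow_neg_atTop (by norm_num : (0:ℝ) < 1/8)).comp h4).const_mul (64:ℝ)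
    simpa using h5
  apply squeeze_zero' _ _ hg0
  · filter_upwards [h4.eventually_ge_atTop 1] with n hn
    exact mul_nonneg (le_trans zero_le_one hn) ENNReal.toReal_nonneg
  · filter_upwards [h4.eventually_ge_atTop 1] with n hA
    set A := (n:ℝ)^γ * Real.log n with hAdef
    have hA0 : (0:ℝ) < A := lt_of_lt_of_le one_pos hA
    have ht : 1 ≤ aSeq α γ n := Real.one_le_rpow hA (by positivity)
    have hb := triangle_bound α hα _ ht
    have htR : (((paretoMeasure α).prod ((paretoMeasure α).prod (paretoMeasure α)))
          {p : ℝ × ℝ × ℝ | p.1 * p.2.1 > aSeq α γ n ∧ p.2.1 * p.2.2 > aSeq α γ n ∧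
            p.1 * p.2.2 > aSeq α γ n}).toReal ≤ 64 / (aSeq α γ n) ^ (9 * α / 8) := by
      have := ENNReal.toReal_mono ENNReal.ofReal_ne_top hb
      rwa [ENNReal.toReal_ofReal (by positivity)] at this
    have hpow : (aSeq α γ n) ^ (9 * α / 8) = A ^ (9/8 : ℝ) := by
      rw [aSeq, ← hAdef, ← Real.rpow_mul hA0.le]
      congr 1
      field_simp
    calc A * (((paretoMeasure α).prod ((paretoMeasure α).prod (paretoMeasure α)))
          {p : ℝ × ℝ × ℝ | p.1 * p.2.1 > aSeq α γ n ∧ p.2.1 * p.2.2 > aSeq α γ n ∧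
            p.1 * p.2.2 > aSeq α γ n}).toReal
        ≤ A * (64 / (aSeq α γ n) ^ (9 * α / 8)) :=
          mul_le_mul_of_nonneg_left htR hA0.le
      _ = 64 * A ^ (-(1/8) : ℝ) := by
          rw [hpow]
          rw [show A * (64 / A ^ (9/8:ℝ)) = 64 * (A * (A ^ (9/8:ℝ))⁻¹) by ring]
          rw [← Real.rpow_neg hA0.le, ← Real.rpow_one_add' hA0.le (by norm_num)]
          norm_num
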